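/- Let λ ∈ ℝ with λ ≠ 0. Then the stabilizer {U ∈ SU(5) : Uᵀ σ(λ, 0) U = σ(λ, 0)} consists exactly of the block-diagonal matrices diag(A, B) with A ∈ SU(2) and B ∈ SU(3), i.e. matrices U with U_{ij} = A_{ij} for i, j ∈ {1, 2}, U_{ij} = B_{i−2, j−2} for i, j ∈ {3, 4, 5}, and all other entries zero; hence the stabilizer of σ(λ, 0) in SU(5) is isomorphic to SU(2) × SU(3). -/

import Mathlib

noncomputable section

open Matrix

/-- The antisymmetric `5×5` matrix `σ(λ, μ)` representing the 2-form
`λ e¹∧e² + μ e³∧e⁴` on `ℂ⁵`. -/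
def sigmaForm (lam mu : ℝ) : Matrix (Fin 5) (Fin 5) ℂ :=
  (lam : ℂ) • (Matrix.single 0 1 1 - Matrix.single 1 0 1) +
    (mu : ℂ) • (Matrix.single 2 3 1 - Matrix.single 3 2 1)

/-- The block-diagonal matrix `diag(A, B)` with `A` of size `2×2` and `B` of size `3×3`. -/
def blockDiag23 (A : Matrix (Fin 2) (Fin 2) ℂ) (B : Matrix (Fin 3) (Fin 3) ℂ) :
    Matrix (Fin 5) (Fin 5) ℂ := fun i j =>
  if hi : (i : ℕ) < 2 then
    (if hj : (j : ℕ) < 2 then A ⟨(i : ℕ), hi⟩ ⟨(j : ℕ), hj⟩ else 0)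
  else if hj : (j : ℕ) < 2 then 0
  else B ⟨(i : ℕ) - 2, by have := i.isLt; omega⟩ ⟨(j : ℕ) - 2, by have := j.isLt; omega⟩

lemma fin5_cases' (P : Fin 5 → Prop) (h0 : P 0) (h1 : P 1) (h2 : P 2) (h3 : P 3) (h4 : P 4) :
    ∀ i, P i := by
  intro i
  fin_cases i
  exacts [h0, h1, h2, h3, h4]

lemma vecTail_const' {α : Type*} {n : ℕ} (a : α) :
    (vecTail fun _ : Fin (n + 1) => a) = fun _ => a := rfl

lemma sigmaForm_zero (lam : ℝ) :
    sigmaForm lam 0 =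
      !![0, (lam : ℂ), 0, 0, 0;
         -(lam : ℂ), 0, 0, 0, 0;
         0, 0, 0, 0, 0;
         0, 0, 0, 0, 0;
         0, 0, 0, 0, 0] := by
  ext i j
  revert j; revert i
  refine fin5_cases' _ ?_ ?_ ?_ ?_ ?_ <;> refine fin5_cases' _ ?_ ?_ ?_ ?_ ?_ <;>
    simp [sigmaForm, Matrix.single, Matrix.head_fin_const, vecTail_const']

lemma blockDiag23_eq (A : Matrix (Fin 2) (Fin 2) ℂ) (B : Matrix (Fin 3) (Fin 3) ℂ) :
    blockDiag23 A B =
      (fromBlocks A 0 0 B).submatrix (finSumFinEquiv (m := 2) (n := 3)).symm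
        (finSumFinEquiv (m := 2) (n := 3)).symm := by
  ext i j
  revert j; revert i
  refine fin5_cases' _ ?_ ?_ ?_ ?_ ?_ <;> refine fin5_cases' _ ?_ ?_ ?_ ?_ ?_ <;> rfl

lemma blockDiag23_eq' (A : Matrix (Fin 2) (Fin 2) ℂ) (B : Matrix (Fin 3) (Fin 3) ℂ) :
    blockDiag23 A B =
      !![A 0 0, A 0 1, 0, 0, 0;
         A 1 0, A 1 1, 0, 0, 0;
         0, 0, B 0 0, B 0 1, B 0 2;
         0, 0, B 1 0, B 1 1, B 1 2;
         0, 0, B 2 0, B 2 1, B 2 2] := by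
  ext i j
  revert j; revert i
  refine fin5_cases' _ ?_ ?_ ?_ ?_ ?_ <;> refine fin5_cases' _ ?_ ?_ ?_ ?_ ?_ <;> rfl

lemma tr_lit (a b c d : ℂ) (e f g h i j k l m : ℂ) :
    (!![a, b, 0, 0, 0;
        c, d, 0, 0, 0;
        0, 0, e, f, g;
        0, 0, h, i, j;
        0, 0, k, l, m])ᵀ =
      !![a, c, 0, 0, 0;
         b, d, 0, 0, 0;
         0, 0, e, h, k;
         0, 0, f, i, l;
         0, 0, g, j, m] := by
  ext x y
  revert y; revert x
  refine fin5_cases' _ ?_ ?_ ?_ ?_ ?_ <;> refine fin5_cases' _ ?_ ?_ ?_ ?_ ?_ <;> rfl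

lemma blockDiag23_det (A : Matrix (Fin 2) (Fin 2) ℂ) (B : Matrix (Fin 3) (Fin 3) ℂ) :
    (blockDiag23 A B).det = A.det * B.det := by
  rw [blockDiag23_eq, Matrix.det_submatrix_equiv_self, Matrix.det_fromBlocks_zero₂₁]

lemma blockDiag23_unitary (A : Matrix (Fin 2) (Fin 2) ℂ) (B : Matrix (Fin 3) (Fin 3) ℂ)
    (hA : A * Aᴴ = 1) (hB : B * Bᴴ = 1) :
    blockDiag23 A B * (blockDiag23 A B)ᴴ = 1 := by
  rw [blockDiag23_eq, conjTranspose_submatrix, fromBlocks_conjTranspose,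
    submatrix_mul_equiv, fromBlocks_multiply]
  simp [hA, hB, fromBlocks_one]

set_option maxHeartbeats 4000000 in
/-- for `λ ≠ 0`, the stabilizer of `σ(λ, 0)` in `SU(5)` under the congruence
action consists exactly of the block-diagonal matrices `diag(A, B)` with `A ∈ SU(2)` and
`B ∈ SU(3)`. -/
theorem stabilizer_sigma_su2_su3 (lam : ℝ) (hlam : lam ≠ 0) :
    ∀ U : Matrix (Fin 5) (Fin 5) ℂ,
      (U ∈ Matrix.specialUnitaryGroup (Fin 5) ℂ ∧
          Uᵀ * sigmaForm lam 0 * U = sigmaForm lam 0) ↔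
        ∃ A ∈ Matrix.specialUnitaryGroup (Fin 2) ℂ,
          ∃ B ∈ Matrix.specialUnitaryGroup (Fin 3) ℂ, U = blockDiag23 A B := by
  intro U
  have hl : (lam : ℂ) ≠ 0 := Complex.ofReal_ne_zero.mpr hlam
  constructor
  · rintro ⟨hU, hσ⟩
    rw [Matrix.mem_specialUnitaryGroup_iff, Matrix.mem_unitaryGroup_iff] at hU
    obtain ⟨hu, hUdet⟩ := hU
    have hu' : U * Uᴴ = 1 := hu
    have h2 : Uᴴᵀ * Uᵀ = (1 : Matrix (Fin 5) (Fin 5) ℂ) := by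
      have h := congrArg Matrix.transpose hu'
      rw [Matrix.transpose_mul, Matrix.transpose_one] at h
      exact h
    have hmain : sigmaForm lam 0 * U = Uᴴᵀ * sigmaForm lam 0 := by
      calc sigmaForm lam 0 * U = (Uᴴᵀ * Uᵀ) * (sigmaForm lam 0 * U) := by rw [h2, one_mul]
        _ = Uᴴᵀ * (Uᵀ * sigmaForm lam 0 * U) := by simp only [Matrix.mul_assoc]
        _ = Uᴴᵀ * sigmaForm lam 0 := by rw [hσ]
    rw [sigmaForm_zero] at hmain
    have e : ∀ i j : Fin 5,
        ((!![0, (lam : ℂ), 0, 0, 0;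
            -(lam : ℂ), 0, 0, 0, 0;
            0, 0, 0, 0, 0;
            0, 0, 0, 0, 0;
            0, 0, 0, 0, 0]) * U) i j =
          (Uᴴᵀ * (!![0, (lam : ℂ), 0, 0, 0;
            -(lam : ℂ), 0, 0, 0, 0;
            0, 0, 0, 0, 0;
            0, 0, 0, 0, 0;
            0, 0, 0, 0, 0])) i j := fun i j => by rw [hmain]
    have z02 : U 0 2 = 0 := by
      have h := e 1 2
      simp [Matrix.mul_apply, Fin.sum_univ_five, Matrix.head_fin_const, vecTail_const',
        Matrix.conjTranspose_apply, Matrix.transpose_apply, hl] at h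
      exact h
    have z03 : U 0 3 = 0 := by
      have h := e 1 3
      simp [Matrix.mul_apply, Fin.sum_univ_five, Matrix.head_fin_const, vecTail_const',
        Matrix.conjTranspose_apply, Matrix.transpose_apply, hl] at h
      exact h
    have z04 : U 0 4 = 0 := by
      have h := e 1 4
      simp [Matrix.mul_apply, Fin.sum_univ_five, Matrix.head_fin_const, vecTail_const',
        Matrix.conjTranspose_apply, Matrix.transpose_apply, hl] at h
      exact h
    have z12 : U 1 2 = 0 := by
      have h := e 0 2
      simp [Matrix.mul_apply, Fin.sum_univ_five, Matrix.head_fin_const, vecTail_const',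
        Matrix.conjTranspose_apply, Matrix.transpose_apply, hl] at h
      exact h
    have z13 : U 1 3 = 0 := by
      have h := e 0 3
      simp [Matrix.mul_apply, Fin.sum_univ_five, Matrix.head_fin_const, vecTail_const',
        Matrix.conjTranspose_apply, Matrix.transpose_apply, hl] at h
      exact h
    have z14 : U 1 4 = 0 := by
      have h := e 0 4
      simp [Matrix.mul_apply, Fin.sum_univ_five, Matrix.head_fin_const, vecTail_const',
        Matrix.conjTranspose_apply, Matrix.transpose_apply, hl] at h
      exact h
    have z21 : U 2 1 = 0 := by
      have h := e 2 0
      simp [Matrix.mul_apply, Fin.sum_univ_five, Matrix.head_fin_const, vecTail_const',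
        Matrix.conjTranspose_apply, Matrix.transpose_apply, hl] at h
      exact h
    have z31 : U 3 1 = 0 := by
      have h := e 3 0
      simp [Matrix.mul_apply, Fin.sum_univ_five, Matrix.head_fin_const, vecTail_const',
        Matrix.conjTranspose_apply, Matrix.transpose_apply, hl] at h
      exact h
    have z41 : U 4 1 = 0 := by
      have h := e 4 0
      simp [Matrix.mul_apply, Fin.sum_univ_five, Matrix.head_fin_const, vecTail_const',
        Matrix.conjTranspose_apply, Matrix.transpose_apply, hl] at h
      exact h
    have z20 : U 2 0 = 0 := by
      have h := e 2 1
      simp [Matrix.mul_apply, Fin.sum_univ_five, Matrix.head_fin_const, vecTail_const',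
        Matrix.conjTranspose_apply, Matrix.transpose_apply, hl] at h
      exact h
    have z30 : U 3 0 = 0 := by
      have h := e 3 1
      simp [Matrix.mul_apply, Fin.sum_univ_five, Matrix.head_fin_const, vecTail_const',
        Matrix.conjTranspose_apply, Matrix.transpose_apply, hl] at h
      exact h
    have z40 : U 4 0 = 0 := by
      have h := e 4 1
      simp [Matrix.mul_apply, Fin.sum_univ_five, Matrix.head_fin_const, vecTail_const',
        Matrix.conjTranspose_apply, Matrix.transpose_apply, hl] at h
      exact h
    have rel1 : U 1 0 = -(starRingEnd ℂ) (U 0 1) := by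
      have h := e 0 0
      simp [Matrix.mul_apply, Fin.sum_univ_five, Matrix.head_fin_const, vecTail_const',
        Matrix.conjTranspose_apply, Matrix.transpose_apply] at h
      apply mul_left_cancel₀ hl
      linear_combination h
    have rel2 : U 1 1 = (starRingEnd ℂ) (U 0 0) := by
      have h := e 0 1
      simp [Matrix.mul_apply, Fin.sum_univ_five, Matrix.head_fin_const, vecTail_const',
        Matrix.conjTranspose_apply, Matrix.transpose_apply] at h
      apply mul_left_cancel₀ hl
      linear_combination h
    -- entries of the unitarity relation
    have h00 := congrFun (congrFun hu' 0) 0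
    have h01 := congrFun (congrFun hu' 0) 1
    have h10 := congrFun (congrFun hu' 1) 0
    have h11 := congrFun (congrFun hu' 1) 1
    have h22 := congrFun (congrFun hu' 2) 2
    have h23 := congrFun (congrFun hu' 2) 3
    have h24 := congrFun (congrFun hu' 2) 4
    have h32 := congrFun (congrFun hu' 3) 2
    have h33 := congrFun (congrFun hu' 3) 3
    have h34 := congrFun (congrFun hu' 3) 4
    have h42 := congrFun (congrFun hu' 4) 2
    have h43 := congrFun (congrFun hu' 4) 3
    have h44 := congrFun (congrFun hu' 4) 4
    simp [Matrix.mul_apply, Fin.sum_univ_five, Matrix.conjTranspose_apply, Matrix.one_apply,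
      z02, z03, z04, z12, z13, z14, z20, z21, z30, z31, z40, z41]
      at h00 h01 h10 h11 h22 h23 h24 h32 h33 h34 h42 h43 h44
    have hUeq : U = blockDiag23 !![U 0 0, U 0 1; U 1 0, U 1 1]
        !![U 2 2, U 2 3, U 2 4; U 3 2, U 3 3, U 3 4; U 4 2, U 4 3, U 4 4] := by
      rw [blockDiag23_eq']
      ext i j
      revert j; revert i
      refine fin5_cases' _ ?_ ?_ ?_ ?_ ?_ <;> refine fin5_cases' _ ?_ ?_ ?_ ?_ ?_ <;>
        simp [z02, z03, z04, z12, z13, z14, z20, z21, z30, z31, z40, z41,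
          Matrix.head_fin_const, vecTail_const']
    have hAdet : (!![U 0 0, U 0 1; U 1 0, U 1 1]).det = 1 := by
      rw [Matrix.det_fin_two_of, rel1, rel2]
      linear_combination h00
    have hBdet : (!![U 2 2, U 2 3, U 2 4; U 3 2, U 3 3, U 3 4;
        U 4 2, U 4 3, U 4 4]).det = 1 := by
      have h := hUdet
      rw [hUeq, blockDiag23_det, hAdet, one_mul] at h
      exact h
    refine ⟨_, ?_, _, ?_, hUeq⟩
    · rw [Matrix.mem_specialUnitaryGroup_iff, Matrix.mem_unitaryGroup_iff]
      refine ⟨?_, hAdet⟩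
      rw [Matrix.star_eq_conjTranspose]
      ext i j
      fin_cases i <;> fin_cases j <;>
        simp [Matrix.mul_apply, Fin.sum_univ_two, Matrix.conjTranspose_apply,
          Matrix.one_apply] <;>
        first
          | linear_combination h00
          | linear_combination h01
          | linear_combination h10
          | linear_combination h11
    · rw [Matrix.mem_specialUnitaryGroup_iff, Matrix.mem_unitaryGroup_iff]
      refine ⟨?_, hBdet⟩
      rw [Matrix.star_eq_conjTranspose]
      ext i j
      fin_cases i <;> fin_cases j <;>
        simp [Matrix.mul_apply, Fin.sum_univ_three, Matrix.conjTranspose_apply,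
          Matrix.one_apply] <;>
        first
          | linear_combination h22
          | linear_combination h23
          | linear_combination h24
          | linear_combination h32
          | linear_combination h33
          | linear_combination h34
          | linear_combination h42
          | linear_combination h43
          | linear_combination h44
  · rintro ⟨A, hA, B, hB, rfl⟩
    rw [Matrix.mem_specialUnitaryGroup_iff] at hA hB
    obtain ⟨hAu, hAdet⟩ := hA
    obtain ⟨hBu, hBdet⟩ := hB
    rw [Matrix.mem_unitaryGroup_iff, Matrix.star_eq_conjTranspose] at hAu hBu
    rw [Matrix.mem_specialUnitaryGroup_iff, Matrix.mem_unitaryGroup_iff]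
    refine ⟨⟨?_, ?_⟩, ?_⟩
    · rw [Matrix.star_eq_conjTranspose]
      exact blockDiag23_unitary A B hAu hBu
    · rw [blockDiag23_det, hAdet, hBdet, one_mul]
    · have hA2 : A 0 0 * A 1 1 - A 0 1 * A 1 0 = 1 := by rw [← det_fin_two]; exact hAdet
      rw [sigmaForm_zero, blockDiag23_eq', tr_lit]
      ext i j
      revert j; revert i
      refine fin5_cases' _ ?_ ?_ ?_ ?_ ?_ <;> refine fin5_cases' _ ?_ ?_ ?_ ?_ ?_ <;>
        simp [Matrix.mul_apply, Fin.sum_univ_five, Matrix.head_fin_const, vecTail_const'] <;>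
        first
          | ring1
          | linear_combination (lam : ℂ) * hA2
          | linear_combination (-(lam : ℂ)) * hA2
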